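/- Stable point condition, noiseless case: Let b = A x* where x* is k-sparse with support Λ, and suppose A_Γ^T A_Γ is invertible for every index set Γ of size k. Fix α̲ > 0 and Γ of size k with Γ ≠ Λ. If there exists an α̲-stable point of the iteration on Γ (i.e., x̄ with supp(x̄) ⊆ Γ, (A^T(b − A x̄))_Γ = 0, and min_{i∈Γ}|x̄_i| ≥ α̲ max_{j∈Γ^C} |(A^T(b − A x̄))_j|), then ‖A_Γ^† A_{Λ∖Γ} x*_{Λ∖Γ}‖ ≥ α̲ ‖A_{Λ∖Γ}^T (I − A_Γ A_Γ^†) A_{Λ∖Γ} x*_{Λ∖Γ}‖. -/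

import Mathlib

open scoped Classical
open Finset Matrix

/-- Euclidean norm of a finitely indexed real vector. -/
noncomputable def euclNorm {m : Type*} [Fintype m] (x : m → ℝ) : ℝ :=
  Real.sqrt (∑ i, (x i) ^ 2)

/-- The column submatrix of `A` indexed by the finset `Γ`. -/
def colSub {n N : ℕ} (A : Matrix (Fin n) (Fin N) ℝ) (Γ : Finset (Fin N)) :
    Matrix (Fin n) Γ ℝ := fun i j => A i j.1

/-- The Moore–Penrose pseudoinverse `A_Γ^† = (A_Γᵀ A_Γ)⁻¹ A_Γᵀ`. -/
noncomputable def pinv {n N : ℕ} (A : Matrix (Fin n) (Fin N) ℝ) (Γ : Finset (Fin N)) :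
    Matrix Γ (Fin n) ℝ := ((colSub A Γ)ᵀ * colSub A Γ)⁻¹ * (colSub A Γ)ᵀ

/-- stable point condition, noiseless case. -/
theorem stable_point_condition_noiseless {n N k : ℕ}
    (A : Matrix (Fin n) (Fin N) ℝ) (xstar : Fin N → ℝ)
    (Λ : Finset (Fin N)) (hΛ : ∀ i, xstar i ≠ 0 ↔ i ∈ Λ) (hΛcard : Λ.card = k)
    (hinv : ∀ Γ : Finset (Fin N), Γ.card = k → IsUnit ((colSub A Γ)ᵀ * colSub A Γ))
    (αl : ℝ) (hαl : 0 < αl)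
    (Γ : Finset (Fin N)) (hΓcard : Γ.card = k) (hne : Γ ≠ Λ)
    (b : Fin n → ℝ) (hb : b = A.mulVec xstar)
    (xb : Fin N → ℝ) (hsupp : ∀ i ∉ Γ, xb i = 0)
    (hgrad : ∀ i ∈ Γ, (Aᵀ.mulVec (b - A.mulVec xb)) i = 0)
    (hmin : ∀ i ∈ Γ, ∀ j ∉ Γ, αl * |(Aᵀ.mulVec (b - A.mulVec xb)) j| ≤ |xb i|) :
    euclNorm ((pinv A Γ * colSub A (Λ \ Γ)).mulVec fun j : ↥(Λ \ Γ) => xstar j.1)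
      ≥ αl * euclNorm (((colSub A (Λ \ Γ))ᵀ * (1 - colSub A Γ * pinv A Γ)
            * colSub A (Λ \ Γ)).mulVec fun j : ↥(Λ \ Γ) => xstar j.1) := by
  set G := colSub A Γ with hG
  set D := colSub A (Λ \ Γ) with hD
  set pG := pinv A Γ with hpG
  set w : ↥(Λ \ Γ) → ℝ := fun j => xstar j.1 with hw
  set v : Fin n → ℝ := D.mulVec w with hv
  set xΓ : ↥Γ → ℝ := fun i => xstar i.1 with hxΓ
  set yΓ : ↥Γ → ℝ := fun i => xb i.1 with hyΓ
  have hzero : ∀ j, j ∉ Λ → xstar j = 0 := by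
    intro j hj
    by_contra h
    exact hj ((hΛ j).mp h)
  -- pG * G = 1
  have hunit : IsUnit (Gᵀ * G).det := (Matrix.isUnit_iff_isUnit_det _).mp (hinv Γ hΓcard)
  have h1 : pG * G = 1 := by
    rw [hpG, pinv, Matrix.mul_assoc]
    exact Matrix.nonsing_inv_mul _ hunit
  -- b = G xΓ + v
  have h2 : b = G.mulVec xΓ + v := by
    rw [hb]
    funext i
    have hGsum : G.mulVec xΓ i = ∑ j ∈ Γ, A i j * xstar j := by
      rw [Matrix.mulVec, dotProduct]
      rw [← Finset.sum_attach Γ (fun j => A i j * xstar j)]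
      rfl
    have hvsum : v i = ∑ j ∈ Λ \ Γ, A i j * xstar j := by
      rw [hv, Matrix.mulVec, dotProduct]
      rw [← Finset.sum_attach (Λ \ Γ) (fun j => A i j * xstar j)]
      rfl
    have : A.mulVec xstar i = ∑ j ∈ Γ ∪ (Λ \ Γ), A i j * xstar j := by
      rw [Matrix.mulVec, dotProduct]
      refine (Finset.sum_subset (Finset.subset_univ _) ?_).symm
      intro j _ hj
      have hjΛ : j ∉ Λ := by
        intro hjΛ
        rcases Finset.mem_union.not.mp hj with h
        by_cases hjΓ : j ∈ Γ
        · exact hj (Finset.mem_union_left _ hjΓ)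
        · exact hj (Finset.mem_union_right _ (Finset.mem_sdiff.mpr ⟨hjΛ, hjΓ⟩))
      rw [hzero j hjΛ, mul_zero]
    rw [this, Finset.sum_union (Finset.disjoint_sdiff), Pi.add_apply, hGsum, hvsum]
  -- A xb = G yΓ
  have h3 : A.mulVec xb = G.mulVec yΓ := by
    funext i
    have hGsum : G.mulVec yΓ i = ∑ j ∈ Γ, A i j * xb j := by
      rw [Matrix.mulVec, dotProduct]
      rw [← Finset.sum_attach Γ (fun j => A i j * xb j)]
      rfl
    rw [Matrix.mulVec, dotProduct, hGsum]
    refine (Finset.sum_subset (Finset.subset_univ Γ) ?_).symm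
    intro j _ hj
    rw [hsupp j hj, mul_zero]
  -- yΓ = pG b
  have hgrad' : Gᵀ.mulVec (b - A.mulVec xb) = 0 := by
    funext i
    have : Gᵀ.mulVec (b - A.mulVec xb) i = (Aᵀ.mulVec (b - A.mulVec xb)) i.1 := rfl
    rw [this, hgrad i.1 i.2]
    rfl
  have h4 : yΓ = pG.mulVec b := by
    have hGb : Gᵀ.mulVec b = (Gᵀ * G).mulVec yΓ := by
      have h0 : Gᵀ.mulVec b - Gᵀ.mulVec (A.mulVec xb) = 0 := by
        rw [← Matrix.mulVec_sub]; exact hgrad'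
      have h0' : Gᵀ.mulVec b = Gᵀ.mulVec (A.mulVec xb) := sub_eq_zero.mp h0
      rw [h0', h3, Matrix.mulVec_mulVec]
    symm
    calc pG *ᵥ b = ((Gᵀ * G)⁻¹ * Gᵀ) *ᵥ b := by rw [hpG, pinv, ← hG]
      _ = (Gᵀ * G)⁻¹ *ᵥ (Gᵀ *ᵥ b) := (Matrix.mulVec_mulVec _ _ _).symm
      _ = (Gᵀ * G)⁻¹ *ᵥ ((Gᵀ * G) *ᵥ yΓ) := by rw [hGb]
      _ = ((Gᵀ * G)⁻¹ * (Gᵀ * G)) *ᵥ yΓ := Matrix.mulVec_mulVec _ _ _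
      _ = yΓ := by rw [Matrix.nonsing_inv_mul _ hunit, Matrix.one_mulVec]
  -- u = yΓ - xΓ
  set u : ↥Γ → ℝ := (pG * D).mulVec w with hu
  have h5 : u = yΓ - xΓ := by
    have : pG.mulVec b = xΓ + u := by
      rw [h2, Matrix.mulVec_add, Matrix.mulVec_mulVec, h1, Matrix.one_mulVec, hv,
        Matrix.mulVec_mulVec, ← hu]
    rw [h4, this]
    abel
  -- residual
  have h6 : b - A.mulVec xb = (1 - G * pG).mulVec v := by
    have hu2 : u = pG.mulVec v := by rw [hu, hv, Matrix.mulVec_mulVec]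
    have hy : yΓ = xΓ + u := by rw [h5]; abel
    have hGy : G.mulVec yΓ = G.mulVec xΓ + (G * pG).mulVec v := by
      rw [hy, Matrix.mulVec_add, hu2, Matrix.mulVec_mulVec]
    rw [h3, h2, hGy, Matrix.sub_mulVec, Matrix.one_mulVec]
    abel
  -- RHS vector
  set z : ↥(Λ \ Γ) → ℝ := ((Dᵀ * (1 - G * pG)) * D).mulVec w with hz
  have h7 : ∀ j : ↥(Λ \ Γ), z j = (Aᵀ.mulVec (b - A.mulVec xb)) j.1 := by
    intro j
    rw [hz, ← Matrix.mulVec_mulVec, ← Matrix.mulVec_mulVec, ← hv, ← h6]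
    rfl
  -- now the inequality
  have hcard : (Γ \ Λ).card = (Λ \ Γ).card :=
    Finset.card_sdiff_comm (by rw [hΓcard, hΛcard])
  have e : ↥(Γ \ Λ) ≃ ↥(Λ \ Γ) := Finset.equivOfCardEq hcard
  -- sum over Λ\Γ of αl^2 z^2 ≤ sum over Γ of u^2
  have key : αl ^ 2 * ∑ j : ↥(Λ \ Γ), z j ^ 2 ≤ ∑ i : ↥Γ, u i ^ 2 := by
    rw [Finset.mul_sum]
    calc ∑ j : ↥(Λ \ Γ), αl ^ 2 * z j ^ 2
        = ∑ i : ↥(Γ \ Λ), αl ^ 2 * z (e i) ^ 2 := (Equiv.sum_comp e _).symm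
      _ ≤ ∑ i : ↥(Γ \ Λ), xb i.1 ^ 2 := by
          refine Finset.sum_le_sum ?_
          intro i _
          have hiΓ : (i : Fin N) ∈ Γ := (Finset.mem_sdiff.mp i.2).1
          have hjΓ : ((e i : ↥(Λ \ Γ)) : Fin N) ∉ Γ := (Finset.mem_sdiff.mp (e i).2).2
          have hm := hmin i.1 hiΓ (e i).1 hjΓ
          have h8 : (αl * |(Aᵀ.mulVec (b - A.mulVec xb)) (e i).1|) ^ 2 ≤ |xb i.1| ^ 2 :=
            pow_le_pow_left₀ (by positivity) hm 2
          rw [mul_pow, sq_abs, sq_abs] at h8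
          rw [h7]
          exact h8
      _ ≤ ∑ i : ↥Γ, u i ^ 2 := by
          have : ∑ i : ↥(Γ \ Λ), xb i.1 ^ 2 = ∑ i ∈ Γ.attach.filter (fun i => i.1 ∉ Λ), u i ^ 2 := by
            refine Finset.sum_bij (fun i _ => (⟨i.1, (Finset.mem_sdiff.mp i.2).1⟩ : ↥Γ)) ?_ ?_ ?_ ?_
            · intro i _
              exact Finset.mem_filter.mpr ⟨Finset.mem_attach _ _, (Finset.mem_sdiff.mp i.2).2⟩
            · intro a _ b _ hab
              have hab' := congrArg Subtype.val hab
              exact Subtype.ext hab'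
            · intro c hc
              obtain ⟨_, hcΛ⟩ := Finset.mem_filter.mp hc
              exact ⟨⟨c.1, Finset.mem_sdiff.mpr ⟨c.2, hcΛ⟩⟩, Finset.mem_univ _, rfl⟩
            · intro i _
              have hiΛ : (i : Fin N) ∉ Λ := (Finset.mem_sdiff.mp i.2).2
              have : u ⟨i.1, (Finset.mem_sdiff.mp i.2).1⟩ = xb i.1 := by
                rw [h5]
                show yΓ _ - xΓ _ = _
                rw [hyΓ, hxΓ]
                simp only []
                rw [hzero i.1 hiΛ, sub_zero]
              rw [this]
          rw [this]
          refine Finset.sum_le_sum_of_subset_of_nonneg (Finset.filter_subset _ _) ?_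
          intro i _ _
          positivity
  -- conclude
  have hnonneg1 : (0:ℝ) ≤ ∑ i : ↥Γ, u i ^ 2 := Finset.sum_nonneg fun i _ => by positivity
  have hnonneg2 : (0:ℝ) ≤ ∑ j : ↥(Λ \ Γ), z j ^ 2 := Finset.sum_nonneg fun j _ => by positivity
  show euclNorm u ≥ αl * euclNorm z
  rw [euclNorm, euclNorm, ge_iff_le]
  have : αl * Real.sqrt (∑ j, z j ^ 2) = Real.sqrt (αl ^ 2 * ∑ j, z j ^ 2) := by
    rw [Real.sqrt_mul (by positivity), Real.sqrt_sq hαl.le]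
  rw [this]
  exact Real.sqrt_le_sqrt key
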